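/- For 1/2 < γ < 1, the ratio (Σ_{j=1}^{n²−1} e^{j^γ}) / (Σ_{j=1}^{n² + ⌊n^{2(1−γ)}⌋} e^{j^γ}) converges to e^{−γ} as n → ∞. -/

import Mathlib

open Real Filter



-- upper: b^γ - a^γ ≤ γ * a^(γ-1) * (b-a), for 0 < a ≤ b, 0 ≤ γ ≤ 1
lemma aux_rpow_sub_le {γ a b : ℝ} (hg0 : 0 ≤ γ) (hg1 : γ ≤ 1) (ha : 0 < a) (hab : a ≤ b) :
    b ^ γ - a ^ γ ≤ γ * a ^ (γ - 1) * (b - a) := by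
  have hb : 0 < b := lt_of_lt_of_le ha hab
  have hs : -1 ≤ (b - a) / a := by
    have h0 : 0 ≤ b - a := by linarith
    have : 0 ≤ (b - a) / a := div_nonneg h0 ha.le
    linarith
  have h := rpow_one_add_le_one_add_mul_self hs hg0 hg1
  have h1 : 1 + (b - a) / a = b / a := by field_simp; ring
  rw [h1] at h
  have h2 : (b / a) ^ γ = b ^ γ / a ^ γ := Real.div_rpow hb.le ha.le γ
  rw [h2] at h
  have hapos : (0:ℝ) < a ^ γ := Real.rpow_pos_of_pos ha γ
  have h3 : b ^ γ ≤ (1 + γ * ((b - a) / a)) * a ^ γ := by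
    rw [div_le_iff₀ hapos] at h; linarith
  have h4 : (1 + γ * ((b - a) / a)) * a ^ γ = a ^ γ + γ * (a ^ γ / a) * (b - a) := by
    field_simp
  rw [h4] at h3
  have h5 : a ^ γ / a = a ^ (γ - 1) := by
    rw [Real.rpow_sub ha, Real.rpow_one]
  rw [h5] at h3; linarith

-- lower: γ * b^(γ-1) * (b-a) ≤ b^γ - a^γ
lemma aux_le_rpow_sub {γ a b : ℝ} (hg0 : 0 ≤ γ) (hg1 : γ ≤ 1) (ha : 0 ≤ a) (hab : a ≤ b) (hb : 0 < b) :
    γ * b ^ (γ - 1) * (b - a) ≤ b ^ γ - a ^ γ := by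
  have hs : -1 ≤ (a - b) / b := by
    rw [le_div_iff₀ hb]; linarith
  have h := rpow_one_add_le_one_add_mul_self hs hg0 hg1
  have h1 : 1 + (a - b) / b = a / b := by field_simp; ring
  rw [h1, Real.div_rpow ha hb.le] at h
  have hbpos : (0:ℝ) < b ^ γ := Real.rpow_pos_of_pos hb γ
  have h3 : a ^ γ ≤ (1 + γ * ((a - b) / b)) * b ^ γ := by
    rw [div_le_iff₀ hbpos] at h; linarith
  have h4 : (1 + γ * ((a - b) / b)) * b ^ γ = b ^ γ - γ * (b ^ γ / b) * (b - a) := by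
    field_simp; ring
  have h5 : b ^ γ / b = b ^ (γ - 1) := by rw [Real.rpow_sub hb, Real.rpow_one]
  rw [h4, h5] at h3; linarith

lemma sum_reindex (x : ℝ) (n L : ℕ) (h : L + 1 ≤ n) :
    ∑ j ∈ Finset.Icc (n - L) n, x ^ (n - j) = ∑ k ∈ Finset.range (L + 1), x ^ k := by
  refine Finset.sum_nbij' (fun j => n - j) (fun k => n - k) ?_ ?_ ?_ ?_ ?_
  all_goals simp only [Finset.mem_Icc, Finset.mem_range]
  · intro a ha; omega
  · intro a ha; omega
  · intro a ha; omega
  · intro a ha; omega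
  · exact fun a ha => trivial

-- upper bound
lemma sum_upper {γ : ℝ} (hg0 : 0 < γ) (hg1 : γ ≤ 1) (n : ℕ) (hn : 1 ≤ n) :
    ∑ j ∈ Finset.Icc 1 n, Real.exp ((j : ℝ) ^ γ) ≤
      Real.exp ((n : ℝ) ^ γ) * (1 - Real.exp (-(γ * (n : ℝ) ^ (γ - 1))))⁻¹ := by
  set r : ℝ := γ * (n : ℝ) ^ (γ - 1) with hr
  have hnp : (0:ℝ) < n := by exact_mod_cast hn
  have hrpos : 0 < r := by
    apply mul_pos hg0 (Real.rpow_pos_of_pos hnp _)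
  set x : ℝ := Real.exp (-r) with hx
  have hx0 : 0 < x := Real.exp_pos _
  have hx1 : x < 1 := by
    rw [hx, Real.exp_lt_one_iff]; linarith
  have step1 : ∀ j ∈ Finset.Icc 1 n, Real.exp ((j : ℝ) ^ γ) ≤ Real.exp ((n : ℝ) ^ γ) * x ^ (n - j) := by
    intro j hj
    simp only [Finset.mem_Icc] at hj
    have hj1 : (1:ℝ) ≤ (j:ℝ) := by exact_mod_cast hj.1
    have hjn : (j:ℝ) ≤ (n:ℝ) := by exact_mod_cast hj.2
    have key := aux_le_rpow_sub hg0.le hg1 (by linarith : (0:ℝ) ≤ (j:ℝ)) hjn hnp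
    have hxpow : x ^ (n - j) = Real.exp (-(r * (n - j : ℕ))) := by
      rw [hx, ← Real.exp_nat_mul]; ring_nf
    rw [hxpow, ← Real.exp_add]
    apply Real.exp_le_exp.2
    have hcast : ((n - j : ℕ) : ℝ) = (n : ℝ) - (j : ℝ) := by
      rw [Nat.cast_sub hj.2]
    rw [hcast]
    nlinarith [key]
  calc ∑ j ∈ Finset.Icc 1 n, Real.exp ((j : ℝ) ^ γ)
      ≤ ∑ j ∈ Finset.Icc 1 n, Real.exp ((n : ℝ) ^ γ) * x ^ (n - j) :=
        Finset.sum_le_sum step1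
    _ = Real.exp ((n : ℝ) ^ γ) * ∑ j ∈ Finset.Icc 1 n, x ^ (n - j) := by
        rw [Finset.mul_sum]
    _ ≤ Real.exp ((n : ℝ) ^ γ) * (1 - x)⁻¹ := by
        apply mul_le_mul_of_nonneg_left _ (Real.exp_pos _).le
        have hre := sum_reindex x n (n - 1) (by omega)
        have h1 : n - (n - 1) = 1 := by omega
        rw [h1] at hre
        have h2 : n - 1 + 1 = n := by omega
        rw [h2] at hre
        rw [hre]
        calc ∑ k ∈ Finset.range n, x ^ k
            ≤ ∑' k : ℕ, x ^ k :=
              Summable.sum_le_tsum _ (fun k _ => pow_nonneg hx0.le k)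
                (summable_geometric_of_lt_one hx0.le hx1)
          _ = (1 - x)⁻¹ := tsum_geometric_of_lt_one hx0.le hx1
    _ = _ := rfl

lemma sum_lower {γ : ℝ} (hg0 : 0 < γ) (hg1 : γ ≤ 1) (n L : ℕ) (hL : L + 1 ≤ n) :
    Real.exp ((n : ℝ) ^ γ) * (1 - Real.exp (-(γ * ((n : ℝ) - L) ^ (γ - 1) * L))) /
        (γ * ((n : ℝ) - L) ^ (γ - 1))
      ≤ ∑ j ∈ Finset.Icc 1 n, Real.exp ((j : ℝ) ^ γ) := by
  have hnL : (0:ℝ) < (n : ℝ) - L := by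
    have : (L:ℝ) + 1 ≤ (n:ℝ) := by exact_mod_cast hL
    linarith
  set s : ℝ := γ * ((n : ℝ) - L) ^ (γ - 1) with hs
  have hspos : 0 < s := mul_pos hg0 (Real.rpow_pos_of_pos hnL _)
  set x : ℝ := Real.exp (-s) with hx
  have hx0 : 0 < x := Real.exp_pos _
  have hx1 : x < 1 := by rw [hx, Real.exp_lt_one_iff]; linarith
  have hcastnL : ((n - L : ℕ) : ℝ) = (n : ℝ) - L := by
    rw [Nat.cast_sub (by omega)]
  -- pointwise bound
  have step1 : ∀ j ∈ Finset.Icc (n - L) n,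
      Real.exp ((n : ℝ) ^ γ) * x ^ (n - j) ≤ Real.exp ((j : ℝ) ^ γ) := by
    intro j hj
    simp only [Finset.mem_Icc] at hj
    have hj1 : (n:ℝ) - L ≤ (j:ℝ) := by
      rw [← hcastnL]; exact_mod_cast hj.1
    have hjpos : (0:ℝ) < (j:ℝ) := lt_of_lt_of_le hnL hj1
    have hjn : (j:ℝ) ≤ (n:ℝ) := by exact_mod_cast hj.2
    have key := aux_rpow_sub_le hg0.le hg1 hjpos hjn
    have hmono : (j:ℝ) ^ (γ - 1) ≤ ((n:ℝ) - L) ^ (γ - 1) :=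
      Real.rpow_le_rpow_of_nonpos hnL hj1 (by linarith)
    have hxpow : x ^ (n - j) = Real.exp (-(s * (n - j : ℕ))) := by
      rw [hx, ← Real.exp_nat_mul]; ring_nf
    rw [hxpow, ← Real.exp_add]
    apply Real.exp_le_exp.2
    have hcast : ((n - j : ℕ) : ℝ) = (n : ℝ) - (j : ℝ) := by rw [Nat.cast_sub hj.2]
    rw [hcast]
    have h2 : γ * (j:ℝ) ^ (γ - 1) * ((n:ℝ) - j) ≤ s * ((n:ℝ) - j) := by
      apply mul_le_mul_of_nonneg_right _ (by linarith)
      exact mul_le_mul_of_nonneg_left hmono hg0.le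
    linarith
  -- geometric sum value and bound
  have hgeom : ∑ j ∈ Finset.Icc (n - L) n, x ^ (n - j)
      = (1 - x ^ (L + 1)) / (1 - x) := by
    rw [sum_reindex x n L hL, geom_sum_eq hx1.ne]
    rw [div_eq_div_iff (by linarith) (by linarith)]
    ring
  have h1x : 1 - x ≤ s := by
    have := Real.add_one_le_exp (-s)
    rw [← hx] at this; linarith
  have hxL : x ^ L = Real.exp (-(s * L)) := by
    rw [hx, ← Real.exp_nat_mul]; ring_nf
  have hxL1 : x ^ L ≤ 1 := pow_le_one₀ hx0.le hx1.le
  have hxsucc : x ^ (L + 1) ≤ x ^ L := by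
    calc x ^ (L+1) = x ^ L * x := pow_succ x L
      _ ≤ x ^ L * 1 := by
          apply mul_le_mul_of_nonneg_left hx1.le (pow_nonneg hx0.le L)
      _ = x ^ L := mul_one _
  have hgb : (1 - Real.exp (-(s * L))) / s ≤ ∑ j ∈ Finset.Icc (n - L) n, x ^ (n - j) := by
    rw [hgeom, ← hxL]
    calc (1 - x ^ L) / s ≤ (1 - x ^ L) / (1 - x) := by
          apply div_le_div_of_nonneg_left (by linarith) (by linarith) h1x
      _ ≤ (1 - x ^ (L + 1)) / (1 - x) := by
          apply div_le_div_of_nonneg_right ?_ (by linarith)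
          · linarith
  calc Real.exp ((n : ℝ) ^ γ) * (1 - Real.exp (-(s * L))) / s
      = Real.exp ((n : ℝ) ^ γ) * ((1 - Real.exp (-(s * L))) / s) := by ring
    _ ≤ Real.exp ((n : ℝ) ^ γ) * ∑ j ∈ Finset.Icc (n - L) n, x ^ (n - j) :=
        mul_le_mul_of_nonneg_left hgb (Real.exp_pos _).le
    _ = ∑ j ∈ Finset.Icc (n - L) n, Real.exp ((n : ℝ) ^ γ) * x ^ (n - j) := by
        rw [Finset.mul_sum]
    _ ≤ ∑ j ∈ Finset.Icc (n - L) n, Real.exp ((j : ℝ) ^ γ) := Finset.sum_le_sum step1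
    _ ≤ ∑ j ∈ Finset.Icc 1 n, Real.exp ((j : ℝ) ^ γ) := by
        apply Finset.sum_le_sum_of_subset_of_nonneg
        · intro a ha; simp only [Finset.mem_Icc] at *; omega
        · intro i _ _; exact (Real.exp_pos _).le


lemma lem_slope : Tendsto (fun x : ℝ => x / (1 - Real.exp (-x))) (nhdsWithin 0 (Set.Ioi 0)) (nhds 1) := by
  have hd : HasDerivAt (fun x : ℝ => 1 - Real.exp (-x)) 1 0 := by
    have h1 : HasDerivAt (fun x : ℝ => Real.exp (-x)) (-1) 0 := by
      have := (Real.hasDerivAt_exp (-0)).comp 0 (hasDerivAt_neg 0)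
      simpa [Function.comp_def] using this
    simpa using h1.const_sub 1
  have hs := hasDerivAt_iff_tendsto_slope.1 hd
  have hs2 : Tendsto (fun x : ℝ => (1 - Real.exp (-x)) / x) (nhdsWithin 0 (Set.Ioi 0)) (nhds 1) := by
    have : Tendsto (slope (fun x : ℝ => 1 - Real.exp (-x)) 0) (nhdsWithin 0 (Set.Ioi 0)) (nhds 1) :=
      hs.mono_left (nhdsWithin_mono 0 (fun x hx => ne_of_gt hx))
    refine this.congr (fun x => ?_)
    simp [slope_def_field]
  have h3 := hs2.inv₀ one_ne_zero
  rw [inv_one] at h3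
  refine h3.congr (fun x => ?_)
  rw [← one_div, one_div_div]

lemma lem_rpow_zero {c : ℝ} (hc : c < 0) :
    Tendsto (fun n : ℕ => (n : ℝ) ^ c) atTop (nhds 0) := by
  have h := tendsto_rpow_neg_atTop (y := -c) (by linarith)
  have := h.comp tendsto_natCast_atTop_atTop (α := ℕ)
  simpa [Function.comp_def] using this

lemma lem_r {γ : ℝ} (hg0 : 0 < γ) (hg1 : γ < 1) :
    Tendsto (fun n : ℕ => γ * (n : ℝ) ^ (γ - 1)) atTop (nhdsWithin 0 (Set.Ioi 0)) := by
  rw [tendsto_nhdsWithin_iff]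
  constructor
  · have := (lem_rpow_zero (by linarith : γ - 1 < 0)).const_mul γ
    simpa using this
  · filter_upwards [eventually_ge_atTop 1] with n hn
    have : (0:ℝ) < (n:ℝ) := by exact_mod_cast hn
    exact Set.mem_Ioi.2 (mul_pos hg0 (Real.rpow_pos_of_pos this _))


lemma F_tendsto {γ : ℝ} (hg0 : 0 < γ) (hg1 : γ < 1) :
    Tendsto (fun n : ℕ => (∑ j ∈ Finset.Icc 1 n, Real.exp ((j : ℝ) ^ γ)) * γ /
      ((n : ℝ) ^ (1 - γ) * Real.exp ((n : ℝ) ^ γ))) atTop (nhds 1) := by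
  set δ : ℝ := 1 - γ / 2 with hδ
  have hδ1 : δ < 1 := by rw [hδ]; linarith
  have hδ0 : 0 < δ := by rw [hδ]; linarith
  set L : ℕ → ℕ := fun n => ⌊(n : ℝ) ^ δ⌋₊ with hLdef
  -- L n / n → 0
  have hLn : Tendsto (fun n : ℕ => (L n : ℝ) / n) atTop (nhds 0) := by
    apply tendsto_of_tendsto_of_tendsto_of_le_of_le' tendsto_const_nhds
      (lem_rpow_zero (by linarith : δ - 1 < 0))
    · filter_upwards with n; positivity
    · filter_upwards [eventually_ge_atTop 1] with n hn
      have hnp : (0:ℝ) < n := by exact_mod_cast hn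
      have h1 : (L n : ℝ) ≤ (n : ℝ) ^ δ := Nat.floor_le (by positivity)
      have h2 : (n:ℝ) ^ (δ - 1) = (n:ℝ) ^ δ / n := by
        rw [Real.rpow_sub hnp, Real.rpow_one]
      rw [h2]
      exact div_le_div_of_nonneg_right h1 hnp.le
  -- eventually L n + 1 ≤ n
  have hLev : ∀ᶠ n : ℕ in atTop, L n + 1 ≤ n := by
    have h2 : ∀ᶠ n : ℕ in atTop, (L n : ℝ) / n < 1/2 :=
      hLn.eventually_lt_const (by norm_num)
    filter_upwards [h2, eventually_ge_atTop 2] with n hhalf hn2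
    have hnp : (0:ℝ) < n := by
      have : (2:ℝ) ≤ n := by exact_mod_cast hn2
      linarith
    have h3 : (L n : ℝ) < (n:ℝ)/2 := by
      rw [div_lt_iff₀ hnp] at hhalf; linarith
    have h4 : (2:ℝ) ≤ (n:ℝ) := by exact_mod_cast hn2
    have : ((L n : ℕ) : ℝ) + 1 ≤ (n:ℝ) := by linarith
    exact_mod_cast this
  -- eventually positivity facts
  have hnLpos : ∀ᶠ n : ℕ in atTop, (0:ℝ) < (n:ℝ) - L n := by
    filter_upwards [hLev] with n hn
    have : ((L n : ℕ):ℝ) + 1 ≤ (n:ℝ) := by exact_mod_cast hn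
    linarith
  -- quotient (n - L)/n → 1
  have hquot : Tendsto (fun n : ℕ => ((n:ℝ) - L n) / n) atTop (nhds 1) := by
    have h := hLn.const_sub 1
    rw [sub_zero] at h
    apply h.congr'
    filter_upwards [eventually_ge_atTop 1] with n hn
    have hnp : (0:ℝ) < n := by exact_mod_cast hn
    field_simp
  -- ((n - L)/n)^(1-γ) → 1
  have hpow : Tendsto (fun n : ℕ => (((n:ℝ) - L n) / n) ^ (1 - γ)) atTop (nhds 1) := by
    have hc : ContinuousAt (fun x : ℝ => x ^ (1 - γ)) 1 :=
      Real.continuousAt_rpow_const 1 (1 - γ) (Or.inl one_ne_zero)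
    have := hc.tendsto.comp hquot
    simpa [Function.comp_def] using this
  -- s*L → ∞
  have hsL : Tendsto (fun n : ℕ => γ * ((n:ℝ) - L n) ^ (γ - 1) * L n) atTop atTop := by
    have hhalf : Tendsto (fun n : ℕ => γ/2 * (n:ℝ) ^ (γ/2)) atTop atTop := by
      apply Tendsto.const_mul_atTop (by linarith : (0:ℝ) < γ/2)
      exact (tendsto_rpow_atTop (by linarith : (0:ℝ) < γ/2)).comp tendsto_natCast_atTop_atTop
    apply tendsto_atTop_mono' _ _ hhalf
    have hδbig : Tendsto (fun n : ℕ => (n:ℝ) ^ δ) atTop atTop :=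
      (tendsto_rpow_atTop hδ0).comp tendsto_natCast_atTop_atTop
    filter_upwards [hLev, hnLpos, eventually_ge_atTop 1, hδbig.eventually_ge_atTop 2]
      with n hn1 hn2 hn3 hn4
    have hnp : (0:ℝ) < n := by exact_mod_cast hn3
    -- (n - L)^(γ-1) ≥ n^(γ-1)
    have hmono : (n:ℝ) ^ (γ - 1) ≤ ((n:ℝ) - L n) ^ (γ - 1) := by
      apply Real.rpow_le_rpow_of_nonpos hn2 _ (by linarith)
      have : (0:ℝ) ≤ (L n : ℝ) := by positivity
      linarith
    -- (L n : ℝ) ≥ n^δ - 1 ≥ n^δ/2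
    have hfloor : (n:ℝ) ^ δ - 1 ≤ (L n : ℝ) := by
      have := Nat.lt_floor_add_one ((n:ℝ) ^ δ)
      push_cast
      linarith
    have hLge : (n:ℝ) ^ δ / 2 ≤ (L n : ℝ) := by linarith
    have hrpos : (0:ℝ) < (n:ℝ) ^ (γ - 1) := Real.rpow_pos_of_pos hnp _
    have h5 : (n:ℝ) ^ (γ - 1) * (n:ℝ) ^ δ = (n:ℝ) ^ (γ/2) := by
      rw [← Real.rpow_add hnp]; congr 1; rw [hδ]; ring
    calc γ/2 * (n:ℝ) ^ (γ/2) = γ * (n:ℝ) ^ (γ - 1) * ((n:ℝ) ^ δ / 2) := by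
          linear_combination (γ/2) * h5.symm
      _ ≤ γ * (n:ℝ) ^ (γ - 1) * (L n : ℝ) := by
          apply mul_le_mul_of_nonneg_left hLge (by positivity)
      _ ≤ γ * ((n:ℝ) - L n) ^ (γ - 1) * (L n : ℝ) := by
          apply mul_le_mul_of_nonneg_right _ (by positivity)
          exact mul_le_mul_of_nonneg_left hmono hg0.le
  -- lower function tends to 1
  have hG : Tendsto (fun n : ℕ =>
      (1 - Real.exp (-(γ * ((n:ℝ) - L n) ^ (γ - 1) * L n))) * (((n:ℝ) - L n) / n) ^ (1 - γ))
      atTop (nhds 1) := by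
    have hexp : Tendsto (fun n : ℕ => Real.exp (-(γ * ((n:ℝ) - L n) ^ (γ - 1) * L n)))
        atTop (nhds 0) :=
      Real.tendsto_exp_atBot.comp (tendsto_neg_atTop_atBot.comp hsL)
    have h1 := (hexp.const_sub 1).mul hpow
    simpa using h1
  -- upper function tends to 1
  have hU : Tendsto (fun n : ℕ =>
      γ * (n:ℝ) ^ (γ - 1) / (1 - Real.exp (-(γ * (n:ℝ) ^ (γ - 1)))))
      atTop (nhds 1) := lem_slope.comp (lem_r hg0 hg1)
  -- squeeze
  apply tendsto_of_tendsto_of_tendsto_of_le_of_le' hG hU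
  · -- G ≤ F eventually
    filter_upwards [hLev, hnLpos, eventually_ge_atTop 1] with n hn1 hn2 hn3
    have hnp : (0:ℝ) < n := by exact_mod_cast hn3
    have hS := sum_lower hg0 hg1.le n (L n) hn1
    set s : ℝ := γ * ((n:ℝ) - L n) ^ (γ - 1) with hs
    have hspos : 0 < s := mul_pos hg0 (Real.rpow_pos_of_pos hn2 _)
    set E : ℝ := Real.exp ((n:ℝ) ^ γ) with hE
    have hEpos : 0 < E := Real.exp_pos _
    set A : ℝ := (n:ℝ) ^ (1 - γ) with hA
    have hApos : 0 < A := Real.rpow_pos_of_pos hnp _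
    set q : ℝ := 1 - Real.exp (-(s * L n)) with hq
    have hqn : 0 ≤ q := by
      have : Real.exp (-(s * L n)) ≤ 1 := by
        rw [Real.exp_le_one_iff]
        have : (0:ℝ) ≤ s * L n := by positivity
        linarith
      rw [hq]; linarith
    -- goal : q * ((n - L)/n)^(1-γ) ≤ S * γ / (A * E)
    have hkey : q * (((n:ℝ) - L n) / n) ^ (1 - γ) = E * q / s * γ / (A * E) := by
      rw [Real.div_rpow hn2.le hnp.le]
      have h1 : ((n:ℝ) - L n) ^ (1 - γ) = γ / s := by
        rw [eq_div_iff hspos.ne', hs, mul_comm γ (((n:ℝ) - L n) ^ (γ - 1)), ← mul_assoc,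
          ← Real.rpow_add hn2]
        norm_num
      rw [h1]
      field_simp
      ring
    calc q * (((n:ℝ) - L n) / n) ^ (1 - γ) = E * q / s * γ / (A * E) := hkey
      _ ≤ (∑ j ∈ Finset.Icc 1 n, Real.exp ((j : ℝ) ^ γ)) * γ / (A * E) := by
          apply div_le_div_of_nonneg_right _ (by positivity)
          apply mul_le_mul_of_nonneg_right _ hg0.le
          exact hS
  · -- F ≤ U eventually
    filter_upwards [eventually_ge_atTop 1] with n hn
    have hnp : (0:ℝ) < n := by exact_mod_cast hn
    have hS := sum_upper hg0 hg1.le n hn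
    set r : ℝ := γ * (n:ℝ) ^ (γ - 1) with hr
    have hrpos : 0 < r := mul_pos hg0 (Real.rpow_pos_of_pos hnp _)
    have hqpos : 0 < 1 - Real.exp (-r) := by
      have : Real.exp (-r) < 1 := by rw [Real.exp_lt_one_iff]; linarith
      linarith
    set E : ℝ := Real.exp ((n:ℝ) ^ γ) with hE
    have hEpos : 0 < E := Real.exp_pos _
    set A : ℝ := (n:ℝ) ^ (1 - γ) with hA
    have hApos : 0 < A := Real.rpow_pos_of_pos hnp _
    have hSnn : 0 ≤ ∑ j ∈ Finset.Icc 1 n, Real.exp ((j : ℝ) ^ γ) :=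
      Finset.sum_nonneg fun i _ => (Real.exp_pos _).le
    have hAr : A * ((n:ℝ) ^ (γ - 1)) = 1 := by
      rw [hA, ← Real.rpow_add hnp]; norm_num
    calc (∑ j ∈ Finset.Icc 1 n, Real.exp ((j : ℝ) ^ γ)) * γ / (A * E)
        ≤ E * (1 - Real.exp (-r))⁻¹ * γ / (A * E) := by
          apply div_le_div_of_nonneg_right _ (by positivity)
          exact mul_le_mul_of_nonneg_right hS hg0.le
      _ = r / (1 - Real.exp (-r)) := by
          rw [div_eq_div_iff (by positivity) hqpos.ne']
          have hx := inv_mul_cancel₀ hqpos.ne'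
          calc E * (1 - Real.exp (-r))⁻¹ * γ * (1 - Real.exp (-r))
              = E * γ * ((1 - Real.exp (-r))⁻¹ * (1 - Real.exp (-r))) := by ring
            _ = E * γ := by rw [hx, mul_one]
            _ = r * (A * E) := by rw [hr]; linear_combination (-(γ * E)) * hAr


lemma aux_P {γ : ℝ} (hg0 : 0 < γ) (hg1 : γ < 1) (c m : ℕ → ℕ)
    (hc : Tendsto c atTop atTop)
    (hq : Tendsto (fun n : ℕ => ((n:ℝ)^2) / ((c n : ℕ) : ℝ)) atTop (nhds 1))
    (hcpos : ∀ᶠ n : ℕ in atTop, (0:ℝ) < ((c n : ℕ) : ℝ))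
    (hm_ge : ∀ᶠ n : ℕ in atTop, (n:ℝ) ^ (2*(1-γ)) ≤ (m n : ℝ) + 1)
    (hm_le : ∀ᶠ n : ℕ in atTop, (m n : ℝ) + 1 ≤ (n:ℝ) ^ (2*(1-γ)) + 1) :
    Tendsto (fun n : ℕ => ((c n : ℕ) : ℝ) ^ (γ-1) * ((m n : ℝ) + 1)) atTop (nhds 1) := by
  have hc0 : Tendsto (fun n : ℕ => ((c n : ℕ) : ℝ) ^ (γ-1)) atTop (nhds 0) :=
    (lem_rpow_zero (by linarith : γ - 1 < 0)).comp hc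
  have hqpow : Tendsto (fun n : ℕ => ((n:ℝ)^2 / ((c n : ℕ) : ℝ)) ^ (1-γ)) atTop (nhds 1) := by
    have hcont : ContinuousAt (fun x : ℝ => x ^ (1-γ)) 1 :=
      Real.continuousAt_rpow_const 1 (1-γ) (Or.inl one_ne_zero)
    simpa [Function.comp_def] using hcont.tendsto.comp hq
  -- key identity: c^(γ-1) * n^(2(1-γ)) = (n^2/c)^(1-γ)  for c > 0, n ≥ 1
  have hkey : ∀ᶠ n : ℕ in atTop, ((c n : ℕ) : ℝ) ^ (γ-1) * (n:ℝ) ^ (2*(1-γ))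
      = ((n:ℝ)^2 / ((c n : ℕ) : ℝ)) ^ (1-γ) := by
    filter_upwards [hcpos, eventually_ge_atTop 1] with n hpos hn1
    have hnp : (0:ℝ) < n := by exact_mod_cast hn1
    have h1 : (n:ℝ) ^ (2*(1-γ)) = ((n:ℝ)^2) ^ (1-γ) := by
      rw [← Real.rpow_natCast (n:ℝ) 2, ← Real.rpow_mul hnp.le]
      norm_num
    have h2 : ((c n : ℕ) : ℝ) ^ (γ-1) = (((c n : ℕ) : ℝ) ^ (1-γ))⁻¹ := by
      rw [← Real.rpow_neg hpos.le]
      congr 1; ring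
    rw [h1, h2, Real.div_rpow (by positivity) hpos.le]
    rw [div_eq_mul_inv, mul_comm]
  have hup : Tendsto (fun n : ℕ => ((n:ℝ)^2 / ((c n : ℕ) : ℝ)) ^ (1-γ) + ((c n : ℕ) : ℝ) ^ (γ-1))
      atTop (nhds 1) := by
    have := hqpow.add hc0
    simpa using this
  apply tendsto_of_tendsto_of_tendsto_of_le_of_le' hqpow hup
  · filter_upwards [hkey, hcpos, hm_ge] with n hk hpos hge
    rw [← hk]
    have : (0:ℝ) < ((c n : ℕ) : ℝ) ^ (γ-1) := Real.rpow_pos_of_pos hpos _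
    nlinarith
  · filter_upwards [hkey, hcpos, hm_le] with n hk hpos hle
    rw [← hk]
    have : (0:ℝ) < ((c n : ℕ) : ℝ) ^ (γ-1) := Real.rpow_pos_of_pos hpos _
    nlinarith

theorem stmt_5 (γ : ℝ) (h1 : 1 / 2 < γ) (h2 : γ < 1) :
    Filter.Tendsto
      (fun n : ℕ =>
        (∑ j ∈ (Finset.Icc 1 (n ^ 2 - 1) : Finset ℕ), Real.exp ((j : ℝ) ^ γ)) /
          ∑ j ∈ Finset.Icc 1 (n ^ 2 + ⌊(n : ℝ) ^ (2 * (1 - γ))⌋₊),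
            Real.exp ((j : ℝ) ^ γ))
      Filter.atTop (nhds (Real.exp (-γ))) := by
  have hg0 : 0 < γ := by linarith
  set m : ℕ → ℕ := fun n => ⌊(n : ℝ) ^ (2 * (1 - γ))⌋₊ with hm
  set a : ℕ → ℕ := fun n => n ^ 2 - 1 with ha
  set b : ℕ → ℕ := fun n => n ^ 2 + m n with hb
  set S : ℕ → ℝ := fun k => ∑ j ∈ Finset.Icc 1 k, Real.exp ((j : ℝ) ^ γ) with hSdef
  set F : ℕ → ℝ := fun k => S k * γ / ((k : ℝ) ^ (1 - γ) * Real.exp ((k : ℝ) ^ γ)) with hFdef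
  -- basic tendsto of index maps
  have hta : Tendsto a atTop atTop := by
    apply tendsto_atTop_atTop.2
    intro k
    refine ⟨k + 1, fun x hx => ?_⟩
    have hx2 : x ≤ x ^ 2 := by nlinarith
    simp only [ha]; omega
  have htb : Tendsto b atTop atTop := by
    apply tendsto_atTop_atTop.2
    intro k
    refine ⟨k, fun x hx => ?_⟩
    have hx2 : x ≤ x ^ 2 := by nlinarith
    simp only [hb]; omega
  have hF := F_tendsto hg0 h2
  have hFa : Tendsto (fun n => F (a n)) atTop (nhds 1) := hF.comp hta
  have hFb : Tendsto (fun n => F (b n)) atTop (nhds 1) := hF.comp htb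
  have hFratio : Tendsto (fun n => F (a n) / F (b n)) atTop (nhds 1) := by
    have := hFa.div hFb one_ne_zero
    simpa [Pi.div_def] using this
  -- cast identities
  have hcasta : ∀ᶠ n : ℕ in atTop, ((a n : ℕ) : ℝ) = (n:ℝ)^2 - 1 := by
    filter_upwards [eventually_ge_atTop 1] with n hn
    have h12 : 1 ≤ n ^ 2 := by nlinarith
    simp only [ha]
    push_cast [Nat.cast_sub h12]
    ring
  have hcastb : ∀ n : ℕ, ((b n : ℕ) : ℝ) = (n:ℝ)^2 + (m n : ℝ) := by
    intro n; simp only [hb]; push_cast; ring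
  have hm_le : ∀ n : ℕ, (m n : ℝ) ≤ (n:ℝ) ^ (2*(1-γ)) := fun n =>
    Nat.floor_le (by positivity)
  have hm_ge : ∀ n : ℕ, (n:ℝ) ^ (2*(1-γ)) ≤ (m n : ℝ) + 1 := fun n =>
    (Nat.lt_floor_add_one _).le
  -- m / n^2 → 0
  have hmN : Tendsto (fun n : ℕ => (m n : ℝ) / (n:ℝ)^2) atTop (nhds 0) := by
    apply tendsto_of_tendsto_of_tendsto_of_le_of_le' tendsto_const_nhds
      (lem_rpow_zero (by linarith : 2*(1-γ) - 2 < 0))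
    · filter_upwards with n; positivity
    · filter_upwards [eventually_ge_atTop 1] with n hn
      have hnp : (0:ℝ) < n := by exact_mod_cast hn
      have h3 : (n:ℝ) ^ (2*(1-γ) - 2) = (n:ℝ) ^ (2*(1-γ)) / (n:ℝ)^2 := by
        rw [Real.rpow_sub hnp]
        congr 1
        rw [← Real.rpow_natCast (n:ℝ) 2]
        norm_num
      rw [h3]
      exact div_le_div_of_nonneg_right (hm_le n) (by positivity)
  -- N / a → 1 and N / b → 1  (N = n^2)
  have hinv2 : Tendsto (fun n : ℕ => ((n:ℝ)^2)⁻¹) atTop (nhds 0) := by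
    apply tendsto_inv_atTop_zero.comp
    exact (tendsto_pow_atTop (two_ne_zero)).comp tendsto_natCast_atTop_atTop
  have hqa : Tendsto (fun n : ℕ => ((a n : ℕ) : ℝ) / (n:ℝ)^2) atTop (nhds 1) := by
    have h := hinv2.const_sub 1
    rw [sub_zero] at h
    apply h.congr'
    filter_upwards [hcasta, eventually_ge_atTop 1] with n hc hn
    have hnp : (0:ℝ) < n := by exact_mod_cast hn
    rw [hc]; field_simp
  have hqb : Tendsto (fun n : ℕ => ((b n : ℕ) : ℝ) / (n:ℝ)^2) atTop (nhds 1) := by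
    have h := hmN.const_add 1
    rw [add_zero] at h
    apply h.congr'
    filter_upwards [eventually_ge_atTop 1] with n hn
    have hnp : (0:ℝ) < n := by exact_mod_cast hn
    rw [hcastb n]; field_simp
  have hNa : Tendsto (fun n : ℕ => (n:ℝ)^2 / ((a n : ℕ) : ℝ)) atTop (nhds 1) := by
    have := hqa.inv₀ one_ne_zero
    rw [inv_one] at this
    refine this.congr fun n => ?_
    rw [← one_div, one_div_div]
  have hNb : Tendsto (fun n : ℕ => (n:ℝ)^2 / ((b n : ℕ) : ℝ)) atTop (nhds 1) := by
    have := hqb.inv₀ one_ne_zero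
    rw [inv_one] at this
    refine this.congr fun n => ?_
    rw [← one_div, one_div_div]
  -- positivity facts
  have hapos : ∀ᶠ n : ℕ in atTop, (0:ℝ) < ((a n : ℕ) : ℝ) := by
    filter_upwards [hta.eventually_ge_atTop 1] with n hn
    exact_mod_cast hn
  have hbpos : ∀ᶠ n : ℕ in atTop, (0:ℝ) < ((b n : ℕ) : ℝ) := by
    filter_upwards [htb.eventually_ge_atTop 1] with n hn
    exact_mod_cast hn
  -- a/b → 1 and its power
  have hab1 : Tendsto (fun n : ℕ => ((a n : ℕ) : ℝ) / ((b n : ℕ) : ℝ)) atTop (nhds 1) := by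
    have h := hqa.div hqb one_ne_zero
    rw [div_one] at h
    apply h.congr'
    filter_upwards [eventually_ge_atTop 1, hbpos] with n hn hbp
    have hnp : (0:ℝ) < n := by exact_mod_cast hn
    simp only [Pi.div_apply]
    field_simp
  have hpow_ab : Tendsto (fun n : ℕ => (((a n : ℕ) : ℝ) / ((b n : ℕ) : ℝ)) ^ (1-γ)) atTop (nhds 1) := by
    have hcont : ContinuousAt (fun x : ℝ => x ^ (1-γ)) 1 :=
      Real.continuousAt_rpow_const 1 (1-γ) (Or.inl one_ne_zero)
    simpa [Function.comp_def] using hcont.tendsto.comp hab1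
  -- b^γ - a^γ → γ
  have hP1 : Tendsto (fun n : ℕ => ((a n : ℕ) : ℝ) ^ (γ-1) * ((m n : ℝ) + 1)) atTop (nhds 1) :=
    aux_P hg0 h2 a m hta hNa hapos
      (Eventually.of_forall hm_ge) (Eventually.of_forall fun n => by linarith [hm_le n])
  have hP2 : Tendsto (fun n : ℕ => ((b n : ℕ) : ℝ) ^ (γ-1) * ((m n : ℝ) + 1)) atTop (nhds 1) :=
    aux_P hg0 h2 b m htb hNb hbpos
      (Eventually.of_forall hm_ge) (Eventually.of_forall fun n => by linarith [hm_le n])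
  have hdiff : Tendsto (fun n : ℕ => ((b n : ℕ) : ℝ) ^ γ - ((a n : ℕ) : ℝ) ^ γ) atTop (nhds γ) := by
    have hlo : Tendsto (fun n : ℕ => γ * (((b n : ℕ) : ℝ) ^ (γ-1) * ((m n : ℝ) + 1))) atTop (nhds γ) := by
      have := hP2.const_mul γ
      simpa using this
    have hup : Tendsto (fun n : ℕ => γ * (((a n : ℕ) : ℝ) ^ (γ-1) * ((m n : ℝ) + 1))) atTop (nhds γ) := by
      have := hP1.const_mul γ
      simpa using this
    apply tendsto_of_tendsto_of_tendsto_of_le_of_le' hlo hup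
    · filter_upwards [hapos, hcasta] with n hap hca
      have hble : ((a n : ℕ) : ℝ) ≤ ((b n : ℕ) : ℝ) := by
        have : a n ≤ b n := by simp only [ha, hb]; omega
        exact_mod_cast this
      have hbp : (0:ℝ) < ((b n : ℕ) : ℝ) := lt_of_lt_of_le hap hble
      have hdiffba : ((b n : ℕ) : ℝ) - ((a n : ℕ) : ℝ) = (m n : ℝ) + 1 := by
        rw [hca, hcastb n]; ring
      have := aux_le_rpow_sub hg0.le h2.le hap.le hble hbp
      rw [hdiffba] at this
      linarith [this]
    · filter_upwards [hapos, hcasta] with n hap hca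
      have hble : ((a n : ℕ) : ℝ) ≤ ((b n : ℕ) : ℝ) := by
        have : a n ≤ b n := by simp only [ha, hb]; omega
        exact_mod_cast this
      have hdiffba : ((b n : ℕ) : ℝ) - ((a n : ℕ) : ℝ) = (m n : ℝ) + 1 := by
        rw [hca, hcastb n]; ring
      have := aux_rpow_sub_le hg0.le h2.le hap hble
      rw [hdiffba] at this
      linarith [this]
  have hexp : Tendsto (fun n : ℕ => Real.exp (((a n : ℕ) : ℝ) ^ γ - ((b n : ℕ) : ℝ) ^ γ))
      atTop (nhds (Real.exp (-γ))) := by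
    apply (Real.continuous_exp.tendsto _).comp
    have := hdiff.neg
    refine this.congr fun n => by ring
  -- combine
  have hmain : Tendsto (fun n : ℕ => F (a n) / F (b n) *
      ((((a n : ℕ) : ℝ) / ((b n : ℕ) : ℝ)) ^ (1-γ) *
        Real.exp (((a n : ℕ) : ℝ) ^ γ - ((b n : ℕ) : ℝ) ^ γ))) atTop (nhds (Real.exp (-γ))) := by
    have := hFratio.mul (hpow_ab.mul hexp)
    simpa using this
  apply hmain.congr'
  filter_upwards [hapos, hbpos, hta.eventually_ge_atTop 1, htb.eventually_ge_atTop 1]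
    with n hap hbp ha1 hb1
  -- show the algebraic identity
  have hSa : 0 < S (a n) := by
    apply Finset.sum_pos (fun i _ => Real.exp_pos _)
    exact ⟨1, Finset.mem_Icc.2 ⟨le_refl 1, ha1⟩⟩
  have hSb : 0 < S (b n) := by
    apply Finset.sum_pos (fun i _ => Real.exp_pos _)
    exact ⟨1, Finset.mem_Icc.2 ⟨le_refl 1, hb1⟩⟩
  have hAr : (0:ℝ) < ((a n : ℕ) : ℝ) ^ (1-γ) := Real.rpow_pos_of_pos hap _
  have hBr : (0:ℝ) < ((b n : ℕ) : ℝ) ^ (1-γ) := Real.rpow_pos_of_pos hbp _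
  have hEa : (0:ℝ) < Real.exp (((a n : ℕ) : ℝ) ^ γ) := Real.exp_pos _
  have hEb : (0:ℝ) < Real.exp (((b n : ℕ) : ℝ) ^ γ) := Real.exp_pos _
  show F (a n) / F (b n) * (_ * _) = S (a n) / S (b n)
  rw [Real.div_rpow hap.le hbp.le, Real.exp_sub]
  simp only [hFdef]
  field_simp
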